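/- Let h : ℝ → ℝ be continuously differentiable with h'(x) = h(x) − h(x−1) for all x, and suppose h(x) → 0 as x → ∞. Then h(x) = ∫_{x−1}^x h(s) ds for all real x. -/

import Mathlib

open Real Filter

theorem stmt2 (h : ℝ → ℝ) (hC1 : ContDiff ℝ 1 h)
    (hder : ∀ x, deriv h x = h x - h (x - 1))
    (hlim : Tendsto h atTop (nhds 0)) (x : ℝ) :
    h x = ∫ s in (x - 1)..x, h s := by
  have hcont : Continuous h := hC1.continuous
  set F : ℝ → ℝ := fun y => ∫ s in (0:ℝ)..y, h s with hF
  have hFderiv : ∀ y : ℝ, HasDerivAt F (h y) y := by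
    intro y
    exact intervalIntegral.integral_hasDerivAt_right
      (hcont.intervalIntegrable 0 y)
      (hcont.stronglyMeasurableAtFilter _ _)
      hcont.continuousAt
  set g : ℝ → ℝ := fun y => h y - (F y - F (y - 1)) with hg
  have hgderiv : ∀ y : ℝ, HasDerivAt g 0 y := by
    intro y
    have h1 : HasDerivAt h (deriv h y) y :=
      ((hC1.differentiable one_ne_zero) y).hasDerivAt
    have h2 : HasDerivAt (fun z => F (z - 1)) (h (y - 1)) y := by
      have := (hFderiv (y - 1)).comp y ((hasDerivAt_id y).sub_const 1)
      simpa [Function.comp_def] using this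
    have := h1.sub ((hFderiv y).sub h2)
    simp [hder y] at this; exact this
  have hconst : ∀ a b : ℝ, g a = g b := by
    intro a b
    exact is_const_of_deriv_eq_zero
      (fun y => (hgderiv y).differentiableAt)
      (fun y => (hgderiv y).deriv) a b
  -- g tends to 0 at top
  have hq0 : Tendsto (fun y => F y - F (y - 1)) atTop (nhds 0) := by
    rw [Metric.tendsto_atTop]
    intro ε hε
    rw [Metric.tendsto_atTop] at hlim
    obtain ⟨N, hN⟩ := hlim (ε / 2) (by linarith)
    refine ⟨N + 1, fun y hy => ?_⟩
    have hle : ∀ s ∈ Set.uIoc (y - 1) y, ‖h s‖ ≤ ε / 2 := by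
      intro s hs
      have : y - 1 ≤ s := by
        rcases Set.mem_uIoc.mp hs with h' | h' <;> linarith [h'.1, h'.2]
      have hsN : N ≤ s := by linarith
      have := hN s hsN
      simpa [Real.dist_eq, abs_sub_comm] using this.le
    have : ‖∫ s in (y - 1)..y, h s‖ ≤ ε / 2 * |y - (y - 1)| :=
      intervalIntegral.norm_integral_le_of_norm_le_const hle
    have heq : F y - F (y - 1) = ∫ s in (y - 1)..y, h s := by
      have h3 := intervalIntegral.integral_add_adjacent_intervals
        (hcont.intervalIntegrable (μ := MeasureTheory.volume) 0 (y - 1)) (hcont.intervalIntegrable (y - 1) y)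
      simp only [hF]
      linarith [h3]
    rw [Real.dist_eq, heq]
    simp only [sub_zero]
    calc |∫ s in (y - 1)..y, h s| ≤ ε / 2 * |y - (y - 1)| := this
      _ = ε / 2 := by norm_num
      _ < ε := by linarith
  have hg0 : Tendsto g atTop (nhds 0) := by
    have := hlim.sub hq0
    simpa using this
  have hgx : g x = 0 := by
    have h1 : Tendsto g atTop (nhds (g x)) := by
      have : g = fun _ => g x := funext fun y => (hconst y x)
      rw [this]; exact tendsto_const_nhds
    exact tendsto_nhds_unique h1 hg0
  have heq : F x - F (x - 1) = ∫ s in (x - 1)..x, h s := by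
    have h3 := intervalIntegral.integral_add_adjacent_intervals
      (hcont.intervalIntegrable (μ := MeasureTheory.volume) 0 (x - 1)) (hcont.intervalIntegrable (x - 1) x)
    simp only [hF]
    linarith [h3]
  have := hgx
  simp only [hg] at this
  linarith [heq ▸ this]
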